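/- arXiv:2502.05705 — 3 statements merged into one kernel-verified Lean document; each statement's English description precedes it below -/
import Mathlib

section
/- Define the distributions E_even, E_odd : ℕ → ℝ by E_even(s) = c·∏_{k=1}^{s/2} 3/(3^k−1) for even s and 0 for odd s, where c = ∏_{k=0}^∞ 1/(1+3^{-k}); and E_odd(s) = c·∏_{k=1}^{(s−1)/2} 3/(3^k−1) for odd s, 0 for even s. Then ∑_{s=0}^∞ E_even(s) = 1 and ∑_{s=0}^∞ E_odd(s) = 1. -/
open scoped BigOperators

/-- The constant c = ∏_{k=0}^∞ (1 + 3^{-k})⁻¹. -/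
noncomputable def cConst : ℝ := ∏' k : ℕ, (1 + ((3 : ℝ) ^ k)⁻¹)⁻¹

/-- The even stationary distribution: E_even(s) = c · ∏_{k=1}^{s/2} 3/(3^k - 1) for
even s, and 0 for odd s. -/
noncomputable def Eeven (s : ℕ) : ℝ :=
  if Even s then cConst * ∏ k ∈ Finset.Icc 1 (s / 2), 3 / ((3 : ℝ) ^ k - 1) else 0

/-- The odd stationary distribution: E_odd(s) = c · ∏_{k=1}^{(s-1)/2} 3/(3^k - 1) for
odd s, and 0 for even s. -/
noncomputable def Eodd (s : ℕ) : ℝ :=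
  if Odd s then cConst * ∏ k ∈ Finset.Icc 1 ((s - 1) / 2), 3 / ((3 : ℝ) ^ k - 1) else 0

namespace EEaux

noncomputable def q : ℝ := (3 : ℝ)⁻¹

lemma q_def : q = (3 : ℝ)⁻¹ := rfl
lemma q_pos : 0 < q := by norm_num [q_def]
lemma q_lt_one : q < 1 := by norm_num [q_def]
lemma q_nonneg : 0 ≤ q := q_pos.le
lemma qpow_pos (m : ℕ) : 0 < q ^ m := pow_pos q_pos m
lemma qpow_nonneg (m : ℕ) : 0 ≤ q ^ m := (qpow_pos m).le
lemma qpow_le_one (m : ℕ) : q ^ m ≤ 1 := pow_le_one₀ q_nonneg q_lt_one.le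
lemma qqpow_nonneg (m n : ℕ) : 0 ≤ (q ^ m) ^ n := pow_nonneg (qpow_nonneg m) n
lemma qqpow_le_one (m n : ℕ) : (q ^ m) ^ n ≤ 1 := pow_le_one₀ (qpow_nonneg m) (qpow_le_one m)

/-- The summand of the series. -/
noncomputable def a (n : ℕ) : ℝ := ∏ k ∈ Finset.Icc 1 n, 3 / ((3 : ℝ) ^ k - 1)

lemma three_pow_sub_one_pos (k : ℕ) (hk : 1 ≤ k) : (0 : ℝ) < 3 ^ k - 1 := by
  have : (3 : ℝ) ^ 1 ≤ 3 ^ k := pow_le_pow_right₀ (by norm_num) hk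
  simp at this; linarith

lemma a_zero : a 0 = 1 := by simp [a]

lemma a_succ (n : ℕ) : a (n + 1) = a n * (3 / ((3 : ℝ) ^ (n + 1) - 1)) := by
  rw [a, a, Finset.prod_Icc_succ_top (Nat.le_add_left 1 n)]

lemma a_pos (n : ℕ) : 0 < a n := by
  induction n with
  | zero => simp [a_zero]
  | succ n ih =>
    rw [a_succ]
    exact mul_pos ih (div_pos (by norm_num)
      (three_pow_sub_one_pos (n+1) (Nat.le_add_left 1 n)))

/-- Key algebraic relation: 3/(3^{n+1}-1) = q^n + q^{n+1} · 3/(3^{n+1}-1). -/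
lemma ratio_rel (n : ℕ) :
    3 / ((3 : ℝ) ^ (n + 1) - 1) = q ^ n + q ^ (n + 1) * (3 / ((3 : ℝ) ^ (n + 1) - 1)) := by
  have hD : ((3 : ℝ) ^ (n+1) - 1) ≠ 0 :=
    ne_of_gt (three_pow_sub_one_pos (n+1) (Nat.le_add_left 1 n))
  have e1 : q ^ n * (3 : ℝ) ^ (n + 1) = 3 := by
    rw [q_def, inv_pow, pow_succ]
    have h3 : ((3:ℝ) ^ n) ≠ 0 := by positivity
    field_simp
  have e2 : q ^ (n + 1) * 3 = q ^ n := by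
    rw [q_def, pow_succ]
    field_simp
  rw [div_eq_iff hD, add_mul, mul_assoc, div_mul_cancel₀ _ hD, mul_sub, e1, mul_one, e2]
  ring

/-- Key recursion: a(n+1) = a n · q^n + q^{n+1} · a(n+1). -/
lemma a_rec (n : ℕ) : a (n + 1) = a n * q ^ n + q ^ (n + 1) * a (n + 1) := by
  calc a (n+1) = a n * (3 / ((3 : ℝ) ^ (n + 1) - 1)) := a_succ n
    _ = a n * (q ^ n + q ^ (n + 1) * (3 / ((3 : ℝ) ^ (n + 1) - 1))) := by rw [← ratio_rel]
    _ = a n * q ^ n + q ^ (n + 1) * (a n * (3 / ((3 : ℝ) ^ (n + 1) - 1))) := by ring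
    _ = a n * q ^ n + q ^ (n + 1) * a (n + 1) := by rw [← a_succ]

lemma summable_a : Summable a := by
  apply summable_of_ratio_norm_eventually_le (r := 1/2) (by norm_num)
  filter_upwards [Filter.eventually_ge_atTop 1] with n hn
  rw [Real.norm_eq_abs, Real.norm_eq_abs, abs_of_pos (a_pos _), abs_of_pos (a_pos _), a_succ]
  have h8 : (8 : ℝ) ≤ 3 ^ (n+1) - 1 := by
    have : (3:ℝ) ^ 2 ≤ 3 ^ (n+1) := pow_le_pow_right₀ (by norm_num) (by omega)
    norm_num at this ⊢; linarith
  have : 3 / ((3:ℝ) ^ (n+1) - 1) ≤ 1/2 := by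
    rw [div_le_div_iff₀ (by linarith) (by norm_num)]; linarith
  calc a n * (3 / ((3:ℝ) ^ (n+1) - 1)) ≤ a n * (1/2) := by
        exact mul_le_mul_of_nonneg_left this (a_pos n).le
    _ = 1/2 * a n := by ring

lemma summable_g (m : ℕ) : Summable (fun n => a n * (q ^ m) ^ n) := by
  apply Summable.of_nonneg_of_le
    (fun n => mul_nonneg (a_pos n).le (qqpow_nonneg m n)) _ summable_a
  intro n
  calc a n * (q ^ m) ^ n ≤ a n * 1 :=
        mul_le_mul_of_nonneg_left (qqpow_le_one m n) (a_pos n).le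
    _ = a n := mul_one _

/-- The key function G m = ∑ a_n q^{mn}. -/
noncomputable def G (m : ℕ) : ℝ := ∑' n, a n * (q ^ m) ^ n

lemma G_rec (m : ℕ) : G m = (1 + q ^ m) * G (m + 1) := by
  have hshift : Summable (fun n => a (n+1) * (q ^ (m+1)) ^ (n+1)) :=
    (summable_nat_add_iff (f := fun n => a n * (q ^ (m+1)) ^ n) 1).2 (summable_g (m+1))
  have hmul : Summable (fun n => q ^ m * (a n * (q ^ (m+1)) ^ n)) :=
    (summable_g (m+1)).mul_left _
  have key : ∀ n, a (n+1) * (q ^ m) ^ (n+1)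
      = q ^ m * (a n * (q ^ (m+1)) ^ n) + a (n+1) * (q ^ (m+1)) ^ (n+1) := by
    intro n
    conv_lhs => rw [a_rec n]
    ring
  have h1 : G m = 1 + ∑' n, a (n+1) * (q ^ m) ^ (n+1) := by
    rw [G, Summable.tsum_eq_zero_add (summable_g m), a_zero]; simp
  have h2 : G (m+1) = 1 + ∑' n, a (n+1) * (q ^ (m+1)) ^ (n+1) := by
    rw [G, Summable.tsum_eq_zero_add (summable_g (m+1)), a_zero]; simp
  have h3 : ∑' n, a (n+1) * (q ^ m) ^ (n+1)
      = q ^ m * G (m+1) + ∑' n, a (n+1) * (q ^ (m+1)) ^ (n+1) := by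
    rw [tsum_congr key, Summable.tsum_add hmul hshift, tsum_mul_left, G]
  have h4 : ∑' n, a (n+1) * (q ^ (m+1)) ^ (n+1) = G (m+1) - 1 := by linarith [h2]
  rw [h1, h3, h4]; ring

lemma G_prod (m : ℕ) : G 0 = (∏ k ∈ Finset.range m, (1 + q ^ k)) * G m := by
  induction m with
  | zero => simp
  | succ m ih =>
    rw [ih, G_rec m, Finset.prod_range_succ]; ring

lemma G_ge_one (m : ℕ) : 1 ≤ G m := by
  have := Summable.le_tsum (summable_g m) 0
    (fun n _ => mul_nonneg (a_pos n).le (qqpow_nonneg m n))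
  simpa [a_zero, G] using this

lemma G_le (m : ℕ) : G m ≤ 1 + q ^ m * G 0 := by
  have h1 : G m = 1 + ∑' n, a (n+1) * (q ^ m) ^ (n+1) := by
    rw [G, Summable.tsum_eq_zero_add (summable_g m), a_zero]; simp
  have hshift : Summable (fun n => a (n+1) * (q ^ m) ^ (n+1)) :=
    (summable_nat_add_iff (f := fun n => a n * (q ^ m) ^ n) 1).2 (summable_g m)
  have hsa : Summable (fun n => a (n+1)) := (summable_nat_add_iff (f := a) 1).2 summable_a
  have hbound : ∀ n, a (n+1) * (q ^ m) ^ (n+1) ≤ q ^ m * a (n+1) := by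
    intro n
    have hle : (q ^ m) ^ (n+1) ≤ q ^ m := by
      calc (q ^ m) ^ (n+1) = q ^ m * (q ^ m) ^ n := by ring
        _ ≤ q ^ m * 1 := mul_le_mul_of_nonneg_left (qqpow_le_one m n) (qpow_nonneg m)
        _ = q ^ m := mul_one _
    calc a (n+1) * (q ^ m) ^ (n+1) ≤ a (n+1) * q ^ m :=
          mul_le_mul_of_nonneg_left hle (a_pos _).le
      _ = q ^ m * a (n+1) := by ring
  have h2 : ∑' n, a (n+1) * (q ^ m) ^ (n+1) ≤ ∑' n, q ^ m * a (n+1) :=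
    Summable.tsum_le_tsum hbound hshift (hsa.mul_left _)
  have h3 : ∑' n, q ^ m * a (n+1) = q ^ m * ∑' n, a (n+1) := tsum_mul_left
  have h4 : ∑' n, a (n+1) ≤ G 0 := by
    have h5 : G 0 = ∑' n, a n := by
      apply tsum_congr; intro n; simp
    rw [h5, Summable.tsum_eq_zero_add summable_a, a_zero]
    linarith
  have hqm : (0:ℝ) ≤ q ^ m := qpow_nonneg m
  calc G m = 1 + ∑' n, a (n+1) * (q ^ m) ^ (n+1) := h1
    _ ≤ 1 + q ^ m * ∑' n, a (n+1) := by rw [← h3]; linarith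
    _ ≤ 1 + q ^ m * G 0 := by
        have := mul_le_mul_of_nonneg_left h4 hqm
        linarith

lemma G_tendsto : Filter.Tendsto G Filter.atTop (nhds 1) := by
  have hq : Filter.Tendsto (fun m : ℕ => q ^ m) Filter.atTop (nhds 0) :=
    tendsto_pow_atTop_nhds_zero_of_lt_one q_nonneg q_lt_one
  have hupper : Filter.Tendsto (fun m : ℕ => 1 + q ^ m * G 0) Filter.atTop (nhds 1) := by
    have := (hq.mul_const (G 0)).const_add (1:ℝ)
    simpa using this
  exact tendsto_of_tendsto_of_tendsto_of_le_of_le tendsto_const_nhds hupper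
    G_ge_one G_le

lemma one_add_pos (k : ℕ) : (0:ℝ) < 1 + q ^ k := by
  have := qpow_pos k; linarith

lemma summable_log : Summable (fun k : ℕ => Real.log (1 + q ^ k)) := by
  apply Summable.of_nonneg_of_le
  · intro k; exact Real.log_nonneg (by have := qpow_nonneg k; linarith)
  · intro k
    have := Real.log_le_sub_one_of_pos (one_add_pos k)
    linarith
  · exact summable_geometric_of_lt_one q_nonneg q_lt_one

lemma P_eq_exp : (∏' k : ℕ, (1 + q ^ k)) = Real.exp (∑' k : ℕ, Real.log (1 + q ^ k)) := by
  have := Real.rexp_tsum_eq_tprod (f := fun k => 1 + q ^ k)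
    (fun k => one_add_pos k) summable_log
  exact this.symm

lemma cConst_eq_exp : cConst = Real.exp (-∑' k : ℕ, Real.log (1 + q ^ k)) := by
  have hlog : ∀ k : ℕ, Real.log ((1 + q ^ k)⁻¹) = -Real.log (1 + q ^ k) := fun k =>
    Real.log_inv _
  have hsum : Summable (fun k : ℕ => Real.log ((1 + q ^ k)⁻¹)) := by
    simp_rw [hlog]; exact summable_log.neg
  have h2 := Real.rexp_tsum_eq_tprod (f := fun k => (1 + q ^ k)⁻¹)
    (fun k => inv_pos.2 (one_add_pos k)) hsum
  have h3 : (∑' k : ℕ, Real.log ((1 + q ^ k)⁻¹)) = -∑' k : ℕ, Real.log (1 + q ^ k) := by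
    simp_rw [hlog]; exact tsum_neg
  have h4 : (fun k : ℕ => (1 + ((3:ℝ) ^ k)⁻¹)⁻¹) = fun k : ℕ => (1 + q ^ k)⁻¹ := by
    funext k; rw [q_def, inv_pow]
  rw [cConst, h4, ← h2]
  rw [h3]

lemma multipliable_P : Multipliable (fun k : ℕ => 1 + q ^ k) :=
  Real.multipliable_of_summable_log (fun k => one_add_pos k) summable_log

lemma G0_eq_P : G 0 = ∏' k : ℕ, (1 + q ^ k) := by
  have hP := multipliable_P.hasProd.tendsto_prod_nat
  have h := hP.mul G_tendsto
  have hconst : Filter.Tendsto (fun m : ℕ =>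
      (∏ k ∈ Finset.range m, (1 + q ^ k)) * G m) Filter.atTop (nhds (G 0)) := by
    have heq : (fun m : ℕ => (∏ k ∈ Finset.range m, (1 + q ^ k)) * G m) = fun _ => G 0 := by
      funext m; exact (G_prod m).symm
    rw [heq]; exact tendsto_const_nhds
  have := tendsto_nhds_unique hconst h
  simpa using this

lemma cConst_mul_G0 : cConst * G 0 = 1 := by
  rw [G0_eq_P, P_eq_exp, cConst_eq_exp, ← Real.exp_add]
  simp

end EEaux

open EEaux in
/-- Both E_even and E_odd are probability distributions: their total mass is 1. -/
theorem Eeven_Eodd_sum_one :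
    (∑' s : ℕ, Eeven s) = 1 ∧ (∑' s : ℕ, Eodd s) = 1 := by
  constructor
  · have hinj : Function.Injective (fun j : ℕ => 2 * j) := by
      intro x y h; simp only at h; omega
    have hsupp : Function.support Eeven ⊆ Set.range (fun j : ℕ => 2 * j) := by
      intro s hs
      rw [Function.mem_support] at hs
      rcases Nat.even_or_odd s with he | ho
      · obtain ⟨t, ht⟩ := he; exact ⟨t, by simp only; omega⟩
      · exact absurd (by simp [Eeven, Nat.not_even_iff_odd.mpr ho]) hs
    rw [← hinj.tsum_eq hsupp]
    have heq : ∀ j : ℕ, Eeven (2 * j) = cConst * a j := by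
      intro j
      have hev : Even (2 * j) := ⟨j, by ring⟩
      simp only [Eeven, if_pos hev, Nat.mul_div_cancel_left j (by norm_num : 0 < 2)]
      rfl
    calc ∑' j, Eeven (2 * j) = ∑' j, cConst * a j := tsum_congr heq
      _ = cConst * ∑' j, a j := tsum_mul_left
      _ = cConst * G 0 := by
          congr 1
          rw [G]; exact (tsum_congr (fun n => by simp)).symm
      _ = 1 := cConst_mul_G0
  · have hinj : Function.Injective (fun j : ℕ => 2 * j + 1) := by
      intro x y h; simp only at h; omega
    have hsupp : Function.support Eodd ⊆ Set.range (fun j : ℕ => 2 * j + 1) := by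
      intro s hs
      rw [Function.mem_support] at hs
      rcases Nat.even_or_odd s with he | ho
      · exact absurd (by simp [Eodd, Nat.not_odd_iff_even.mpr he]) hs
      · obtain ⟨t, ht⟩ := ho; exact ⟨t, by simp only; omega⟩
    rw [← hinj.tsum_eq hsupp]
    have heq : ∀ j : ℕ, Eodd (2 * j + 1) = cConst * a j := by
      intro j
      have hodd : Odd (2 * j + 1) := ⟨j, by ring⟩
      have hdiv : (2 * j + 1 - 1) / 2 = j := by omega
      simp only [Eodd, if_pos hodd, hdiv]
      rfl
    calc ∑' j, Eodd (2 * j + 1) = ∑' j, cConst * a j := tsum_congr heq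
      _ = cConst * ∑' j, a j := tsum_mul_left
      _ = cConst * G 0 := by
          congr 1
          rw [G]; exact (tsum_congr (fun n => by simp)).symm
      _ = 1 := cConst_mul_G0
end

section
/- For every even integer s ≥ 4, the tail sum of the even stationary distribution satisfies ∑_{s'≥s, s' even} E_even(s') < C · 3^{−s(s−2)/8}, where C = ∏_{k=1}^∞ 1/(1−3^{-k}) and E_even(s') = (∏_{k=0}^∞ 1/(1+3^{-k})) · ∏_{k=1}^{s'/2} 3/(3^k−1). -/
open scoped BigOperators

/-- The constant C = ∏_{k=1}^∞ (1 - 3^{-k})⁻¹. -/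
noncomputable def CConst : ℝ := ∏' k : ℕ, (1 - ((3 : ℝ) ^ (k + 1))⁻¹)⁻¹

lemma la_summable : Summable (fun k : ℕ => Real.log ((1 + ((3:ℝ)^k)⁻¹)⁻¹)) := by
  have h : Summable (fun k : ℕ => Real.log (1 + ((3:ℝ)^k)⁻¹)) := by
    apply Summable.of_nonneg_of_le (f := fun k : ℕ => ((3:ℝ)⁻¹) ^ k)
    · intro k
      apply Real.log_nonneg
      have : (0:ℝ) ≤ ((3:ℝ)^k)⁻¹ := by positivity
      linarith
    · intro k
      have h1 : (0:ℝ) < 1 + ((3:ℝ)^k)⁻¹ := by positivity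
      have := Real.log_le_sub_one_of_pos h1
      rw [inv_pow]
      linarith
    · exact summable_geometric_of_lt_one (by norm_num) (by norm_num)
  have := h.neg
  apply this.congr
  intro k
  rw [Real.log_inv]

lemma cConst_eq : cConst = Real.exp (∑' k : ℕ, Real.log ((1 + ((3:ℝ)^k)⁻¹)⁻¹)) := by
  have := Real.rexp_tsum_eq_tprod (ι := ℕ)
    (f := fun k => (1 + ((3:ℝ)^k)⁻¹)⁻¹) (fun k => by positivity) la_summable
  rw [cConst]
  exact (this).symm

lemma cConst_pos : 0 < cConst := by rw [cConst_eq]; exact Real.exp_pos _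

lemma cConst_le_half : cConst ≤ 1/2 := by
  rw [cConst_eq]
  have hS : (∑' k : ℕ, Real.log ((1 + ((3:ℝ)^k)⁻¹)⁻¹)) ≤ Real.log ((1:ℝ)/2) := by
    have h0 : Real.log ((1 + ((3:ℝ)^0)⁻¹)⁻¹) = Real.log ((1:ℝ)/2) := by norm_num
    calc (∑' k : ℕ, Real.log ((1 + ((3:ℝ)^k)⁻¹)⁻¹))
        ≤ Real.log ((1 + ((3:ℝ)^0)⁻¹)⁻¹) := by
          have hneg := la_summable.neg
          have h1 := Summable.le_tsum hneg 0 (fun j _ => by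
            rw [Real.log_inv, neg_neg]
            apply Real.log_nonneg
            have : (0:ℝ) ≤ ((3:ℝ)^j)⁻¹ := by positivity
            linarith)
          rw [tsum_neg] at h1
          linarith
      _ = Real.log ((1:ℝ)/2) := h0
  calc Real.exp _ ≤ Real.exp (Real.log ((1:ℝ)/2)) := Real.exp_le_exp.mpr hS
    _ = 1/2 := Real.exp_log (by norm_num)

lemma gfact_pos (k : ℕ) : (0:ℝ) < (1 - ((3:ℝ)^(k+1))⁻¹)⁻¹ := by
  have h1 : ((3:ℝ)^(k+1))⁻¹ ≤ 3⁻¹ := by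
    apply inv_anti₀ (by norm_num)
    calc (3:ℝ) = 3^1 := by norm_num
      _ ≤ 3^(k+1) := by apply pow_le_pow_right₀ (by norm_num); omega
  have : (0:ℝ) < 1 - ((3:ℝ)^(k+1))⁻¹ := by linarith
  positivity

lemma gfact_one_le (k : ℕ) : (1:ℝ) ≤ (1 - ((3:ℝ)^(k+1))⁻¹)⁻¹ := by
  have h0 : (0:ℝ) < ((3:ℝ)^(k+1))⁻¹ := by positivity
  have h1 : ((3:ℝ)^(k+1))⁻¹ ≤ 3⁻¹ := by
    apply inv_anti₀ (by norm_num)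
    calc (3:ℝ) = 3^1 := by norm_num
      _ ≤ 3^(k+1) := by apply pow_le_pow_right₀ (by norm_num); omega
  rw [le_inv_comm₀ (by norm_num) (by linarith)]
  linarith

lemma lg_summable : Summable (fun k : ℕ => Real.log ((1 - ((3:ℝ)^(k+1))⁻¹)⁻¹)) := by
  apply Summable.of_nonneg_of_le (f := fun k : ℕ => ((3:ℝ)⁻¹) ^ k)
  · intro k
    exact Real.log_nonneg (gfact_one_le k)
  · intro k
    set x : ℝ := ((3:ℝ)^(k+1))⁻¹ with hx
    have h0 : (0:ℝ) < x := by positivity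
    have h1 : x ≤ 3⁻¹ := by
      apply inv_anti₀ (by norm_num)
      calc (3:ℝ) = 3^1 := by norm_num
        _ ≤ 3^(k+1) := by apply pow_le_pow_right₀ (by norm_num); omega
    have hpos : (0:ℝ) < 1 - x := by linarith
    have hlog := Real.log_le_sub_one_of_pos (gfact_pos k)
    have hinv : (1 - x)⁻¹ ≤ 1 + 2*x := by
      rw [inv_le_iff_one_le_mul₀ hpos]
      nlinarith
    have hxk : x = 3⁻¹ * ((3:ℝ)⁻¹)^k := by
      rw [hx, pow_succ, mul_inv, inv_pow]; ring
    calc Real.log ((1 - x)⁻¹) ≤ (1-x)⁻¹ - 1 := hlog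
      _ ≤ 2*x := by linarith
      _ ≤ ((3:ℝ)⁻¹)^k := by
          rw [hxk]
          have : (0:ℝ) ≤ ((3:ℝ)⁻¹)^k := by positivity
          nlinarith
  · exact summable_geometric_of_lt_one (by norm_num) (by norm_num)

lemma CConst_eq : CConst = Real.exp (∑' k : ℕ, Real.log ((1 - ((3:ℝ)^(k+1))⁻¹)⁻¹)) := by
  have := Real.rexp_tsum_eq_tprod (ι := ℕ)
    (f := fun k => (1 - ((3:ℝ)^(k+1))⁻¹)⁻¹) (fun k => gfact_pos k) lg_summable
  exact this.symm

lemma CConst_pos : 0 < CConst := by rw [CConst_eq]; exact Real.exp_pos _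

lemma prod_le_CConst (m : ℕ) :
    (∏ k ∈ Finset.Icc 1 m, (1 - ((3:ℝ)^k)⁻¹)⁻¹) ≤ CConst := by
  have hre : (∏ k ∈ Finset.Icc 1 m, (1 - ((3:ℝ)^k)⁻¹)⁻¹)
      = ∏ k ∈ Finset.range m, (1 - ((3:ℝ)^(k+1))⁻¹)⁻¹ := by
    rw [← Finset.Ico_add_one_right_eq_Icc, Finset.prod_Ico_eq_prod_range]
    simp [add_comm]
  rw [hre, CConst_eq]
  have hexp : (∏ k ∈ Finset.range m, (1 - ((3:ℝ)^(k+1))⁻¹)⁻¹)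
      = Real.exp (∑ k ∈ Finset.range m, Real.log ((1 - ((3:ℝ)^(k+1))⁻¹)⁻¹)) := by
    rw [Real.exp_sum]
    exact (Finset.prod_congr rfl (fun k _ => (Real.exp_log (gfact_pos k)).symm))
  rw [hexp]
  apply Real.exp_le_exp.mpr
  exact Summable.sum_le_tsum _ (fun k _ => Real.log_nonneg (gfact_one_le k)) lg_summable


lemma factor_eq (k : ℕ) (hk : 1 ≤ k) :
    3/((3:ℝ)^k - 1) = ((3:ℝ)^(k-1))⁻¹ * (1 - ((3:ℝ)^k)⁻¹)⁻¹ := by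
  have h3 : (3:ℝ)^(k-1) * 3 = 3^k := by
    rw [← pow_succ]; congr 1; omega
  have h1 : (1:ℝ) < 3^k := by
    calc (1:ℝ) < 3^1 := by norm_num
      _ ≤ 3^k := by apply pow_le_pow_right₀ (by norm_num); omega
  have hne : (3:ℝ)^k - 1 ≠ 0 := by linarith
  have hne2 : (3:ℝ)^k ≠ 0 := by positivity
  have hne3 : (3:ℝ)^(k-1) ≠ 0 := by positivity
  have hne4 : 1 - ((3:ℝ)^k)⁻¹ ≠ 0 := by
    have : ((3:ℝ)^k)⁻¹ < 1 := by
      rw [inv_lt_one_iff₀]; right; exact h1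
    linarith
  field_simp
  linear_combination h3

lemma prod_ratio_eq (m : ℕ) :
    ∏ k ∈ Finset.Icc 1 m, 3/((3:ℝ)^k - 1)
      = ((3:ℝ)^(m*(m-1)/2))⁻¹ * ∏ k ∈ Finset.Icc 1 m, (1 - ((3:ℝ)^k)⁻¹)⁻¹ := by
  have hsum : (∑ k ∈ Finset.Icc 1 m, (k-1)) = m*(m-1)/2 := by
    rw [← Finset.Ico_add_one_right_eq_Icc, Finset.sum_Ico_eq_sum_range]
    have hm : m + 1 - 1 = m := by omega
    rw [hm]
    rw [Finset.sum_congr rfl (fun i _ => show 1 + i - 1 = i by omega)]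
    exact Finset.sum_range_id m
  calc ∏ k ∈ Finset.Icc 1 m, 3/((3:ℝ)^k - 1)
      = ∏ k ∈ Finset.Icc 1 m, (((3:ℝ)^(k-1))⁻¹ * (1 - ((3:ℝ)^k)⁻¹)⁻¹) := by
        refine Finset.prod_congr rfl (fun k hk => ?_)
        exact factor_eq k (Finset.mem_Icc.mp hk).1
    _ = (∏ k ∈ Finset.Icc 1 m, ((3:ℝ)^(k-1))⁻¹) * ∏ k ∈ Finset.Icc 1 m, (1 - ((3:ℝ)^k)⁻¹)⁻¹ :=
        Finset.prod_mul_distrib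
    _ = ((3:ℝ)^(m*(m-1)/2))⁻¹ * ∏ k ∈ Finset.Icc 1 m, (1 - ((3:ℝ)^k)⁻¹)⁻¹ := by
        rw [Finset.prod_inv_distrib, Finset.prod_pow_eq_pow_sum, hsum]

lemma nat_exp_le (j m : ℕ) (hj : 2 ≤ j) (hm : j ≤ m) :
    j*(j-1)/2 + 2*(m-j) ≤ m*(m-1)/2 := by
  have hevj : Even (j*(j-1)) := by
    have := Nat.even_mul_succ_self (j-1)
    rw [Nat.sub_add_cancel (by omega)] at this
    rwa [mul_comm]
  have hevm : Even (m*(m-1)) := by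
    have := Nat.even_mul_succ_self (m-1)
    rw [Nat.sub_add_cancel (by omega)] at this
    rwa [mul_comm]
  rw [Nat.le_div_iff_mul_le (by norm_num)]
  have h1 : (j*(j-1)/2 + 2*(m-j)) * 2 = j*(j-1) + 4*(m-j) := by
    have := Nat.div_mul_cancel hevj.two_dvd
    omega
  rw [h1]
  obtain ⟨d, rfl⟩ : ∃ d, m = j + d := ⟨m - j, by omega⟩
  obtain ⟨j', rfl⟩ : ∃ j', j = j' + 2 := ⟨j - 2, by omega⟩
  have h2 : j' + 2 + d - 1 = j' + 1 + d := by omega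
  have h3 : j' + 2 - 1 = j' + 1 := by omega
  rw [h2, h3, show j' + 2 + d - (j' + 2) = d from by omega]
  have hd : d ≤ d * d := by
    cases d with
    | zero => simp
    | succ t => exact Nat.le_mul_of_pos_left _ (Nat.succ_pos t)
  nlinarith

lemma Eeven_nonneg (n : ℕ) : 0 ≤ Eeven n := by
  unfold Eeven
  split
  · apply mul_nonneg cConst_pos.le
    apply Finset.prod_nonneg
    intro k hk
    have hk1 : 1 ≤ k := (Finset.mem_Icc.mp hk).1
    have : (1:ℝ) < 3^k := by
      calc (1:ℝ) < 3^1 := by norm_num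
        _ ≤ 3^k := by apply pow_le_pow_right₀ (by norm_num); omega
    have : (0:ℝ) < 3^k - 1 := by linarith
    positivity
  · exact le_refl 0

/-- For every even s ≥ 4, the tail of the even stationary distribution satisfies
∑_{s' ≥ s} E_even(s') < C · 3^{-s(s-2)/8}. -/
theorem Eeven_tail_bound (s : ℕ) (hs : Even s) (hs4 : 4 ≤ s) :
    (∑' s' : ℕ, if s ≤ s' then Eeven s' else 0) <
      CConst * ((3 : ℝ) ^ (s * (s - 2) / 8))⁻¹ := by
  obtain ⟨j, rfl⟩ := hs
  have hj2 : 2 ≤ j := by omega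
  have hevj : Even (j*(j-1)) := by
    have := Nat.even_mul_succ_self (j-1)
    rw [Nat.sub_add_cancel (by omega)] at this
    rwa [mul_comm]
  set e := j*(j-1)/2 with hedef
  have he2 : e * 2 = j*(j-1) := Nat.div_mul_cancel hevj.two_dvd
  have hexp : (j+j) * ((j+j) - 2) / 8 = e := by
    have h2 : j + j - 2 = 2*(j-1) := by omega
    have h8 : (j+j) * ((j+j)-2) = 8*e := by
      rw [h2]
      calc (j+j) * (2*(j-1)) = 4*(j*(j-1)) := by ring
        _ = 4*(e*2) := by rw [he2]
        _ = 8*e := by ring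
    rw [h8]
    exact Nat.mul_div_cancel_left e (by norm_num)
  rw [hexp]
  set A : ℝ := ((3:ℝ)^e)⁻¹ with hA
  have hApos : 0 < A := by positivity
  set K : ℝ := cConst * CConst * A with hK
  have hKpos : 0 < K := mul_pos (mul_pos cConst_pos CConst_pos) hApos
  set g : ℕ → ℝ := fun n => if j + j ≤ n then K * ((3:ℝ)⁻¹)^(n - (j+j)) else 0 with hg
  have hg_shift : ∀ n : ℕ, g (n + (j+j)) = K * ((3:ℝ)⁻¹)^n := by
    intro n
    simp only [hg]
    rw [if_pos (by omega)]
    congr 2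
    omega
  have hgeo : Summable (fun n : ℕ => K * ((3:ℝ)⁻¹)^n) :=
    (summable_geometric_of_lt_one (by norm_num) (by norm_num)).mul_left K
  have hgsum : Summable g := by
    rw [← summable_nat_add_iff (j+j)]
    exact hgeo.congr (fun n => (hg_shift n).symm)
  have hgtsum : ∑' n, g n = K * (3/2) := by
    have hsplit := (Summable.sum_add_tsum_nat_add (f := g) (j+j) hgsum).symm
    have hzero : ∑ i ∈ Finset.range (j+j), g i = 0 := by
      apply Finset.sum_eq_zero
      intro i hi
      simp only [hg]
      rw [if_neg (by simpa using Finset.mem_range.mp hi)]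
    have htail : ∑' i, g (i + (j+j)) = K * (3/2) := by
      rw [tsum_congr hg_shift, tsum_mul_left, tsum_geometric_of_lt_one (by norm_num) (by norm_num)]
      norm_num
    rw [hsplit, hzero, htail, zero_add]
  -- termwise bound
  have hfg : ∀ n : ℕ, (if j + j ≤ n then Eeven n else 0) ≤ g n := by
    intro n
    by_cases hn : j + j ≤ n
    · rw [if_pos hn]
      simp only [hg]
      rw [if_pos hn]
      have hrpos : (0:ℝ) < ((3:ℝ)⁻¹)^(n - (j+j)) := by positivity
      by_cases hne : Even n
      · obtain ⟨m, rfl⟩ := hne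
        have hm : j ≤ m := by omega
        have hd2 : (m + m) / 2 = m := by omega
        rw [Eeven, if_pos ⟨m, rfl⟩, hd2, prod_ratio_eq m]
        set Qm := ∏ k ∈ Finset.Icc 1 m, (1 - ((3:ℝ)^k)⁻¹)⁻¹ with hQm
        have hQpos : 0 < Qm := by
          apply Finset.prod_pos
          intro k hk
          have hk1 : 1 ≤ k := (Finset.mem_Icc.mp hk).1
          have h1 : (1:ℝ) < 3^k := by
            calc (1:ℝ) < 3^1 := by norm_num
              _ ≤ 3^k := by apply pow_le_pow_right₀ (by norm_num); omega
          have : ((3:ℝ)^k)⁻¹ < 1 := by rw [inv_lt_one_iff₀]; right; exact h1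
          have : (0:ℝ) < 1 - ((3:ℝ)^k)⁻¹ := by linarith
          positivity
        have hpow : ((3:ℝ)^(m*(m-1)/2))⁻¹ ≤ A * ((3:ℝ)⁻¹)^((m+m) - (j+j)) := by
          have hsub : (m+m) - (j+j) = 2*(m-j) := by omega
          rw [hsub, hA, inv_pow, ← mul_inv, ← pow_add]
          apply inv_anti₀ (by positivity)
          apply pow_le_pow_right₀ (by norm_num)
          have := nat_exp_le j m hj2 hm
          omega
        have hstep : ((3:ℝ)^(m*(m-1)/2))⁻¹ * Qm
            ≤ (A * ((3:ℝ)⁻¹)^((m+m) - (j+j))) * CConst :=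
          mul_le_mul hpow (prod_le_CConst m) hQpos.le (by positivity)
        calc cConst * (((3:ℝ)^(m*(m-1)/2))⁻¹ * Qm)
            ≤ cConst * ((A * ((3:ℝ)⁻¹)^((m+m) - (j+j))) * CConst) :=
              mul_le_mul_of_nonneg_left hstep cConst_pos.le
          _ = K * ((3:ℝ)⁻¹)^((m+m) - (j+j)) := by rw [hK]; ring
      · rw [Eeven, if_neg hne]
        positivity
    · rw [if_neg hn]
      simp only [hg]
      rw [if_neg hn]
  have hf_nonneg : ∀ n : ℕ, 0 ≤ (if j + j ≤ n then Eeven n else 0) := by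
    intro n
    split
    · exact Eeven_nonneg n
    · exact le_refl 0
  have hfsum : Summable (fun n : ℕ => if j + j ≤ n then Eeven n else 0) :=
    Summable.of_nonneg_of_le hf_nonneg hfg hgsum
  calc (∑' n : ℕ, if j + j ≤ n then Eeven n else 0)
      ≤ ∑' n, g n := Summable.tsum_le_tsum hfg hfsum hgsum
    _ = K * (3/2) := hgtsum
    _ < CConst * A := by
        have hKe : K * (3/2) = (cConst * (3/2)) * (CConst * A) := by rw [hK]; ring
        rw [hKe]
        have hX : 0 < CConst * A := mul_pos CConst_pos hApos
        nlinarith [cConst_le_half, cConst_pos]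
end

section
/- The distribution E_even, given by E_even(2j) = c·∏_{k=1}^{j} 3/(3^k−1) with c = ∏_{k=0}^∞(1+3^{-k})^{-1}, is stationary for the alternating mod-3 Lagrangian Markov operator M_L: for every even s ≥ 0, ∑_r m_{r,s}·E_even(r) = E_even(s), where m_{r,s} = 1 − 3^{−r/2} if s = r−2 ≥ 0 and r even, m_{r,s} = 3^{−r/2} if s = r+2 and r even, and 0 otherwise. -/
open scoped BigOperators

/-- Transition coefficients of the (even-state) alternating mod-3 Lagrangian Markov
operator: for r even, m_{r,s} = 1 - 3^{-r/2} if s = r - 2 ≥ 0, m_{r,s} = 3^{-r/2}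
if s = r + 2, and 0 otherwise. -/
noncomputable def mCoeff (r s : ℕ) : ℝ :=
  if Even r then
    if s + 2 = r then 1 - ((3 : ℝ) ^ (r / 2))⁻¹
    else if s = r + 2 then ((3 : ℝ) ^ (r / 2))⁻¹
    else 0
  else 0

lemma Eeven_apply (j : ℕ) :
    Eeven (2 * j) = cConst * ∏ k ∈ Finset.Icc 1 j, 3 / ((3 : ℝ) ^ k - 1) := by
  have h : Even (2 * j) := even_two_mul j
  simp [Eeven, h, Nat.mul_div_cancel_left j (by norm_num : 0 < 2)]

lemma mCoeff_eq_zero {r s : ℕ} (h1 : s + 2 ≠ r) (h2 : s ≠ r + 2) : mCoeff r s = 0 := by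
  unfold mCoeff
  split_ifs <;> simp_all

lemma pow_sub_one_ne (k : ℕ) (hk : 1 ≤ k) : (3 : ℝ) ^ k - 1 ≠ 0 := by
  have : (1 : ℝ) < 3 ^ k := by
    calc (1:ℝ) < 3 := by norm_num
    _ ≤ 3 ^ k := le_self_pow₀ (by norm_num) (by omega)
  linarith

/-- E_even is stationary for the alternating mod-3 Lagrangian Markov operator:
for every even s, ∑_r m_{r,s}·E_even(r) = E_even(s). -/
theorem Eeven_stationary (s : ℕ) (hs : Even s) :
    (∑' r : ℕ, mCoeff r s * Eeven r) = Eeven s := by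
  obtain ⟨j, rfl⟩ : ∃ j, s = 2 * j := by
    obtain ⟨j, hj⟩ := hs; exact ⟨j, by omega⟩
  rcases j with _ | k
  · -- s = 0 : only r = 2 contributes
    have h : ∀ r : ℕ, r ≠ 2 → mCoeff r (2 * 0) * Eeven r = 0 := by
      intro r hr
      have h0 : mCoeff r (2 * 0) = 0 := mCoeff_eq_zero (by omega) (by omega)
      exact mul_eq_zero_of_left h0 _
    rw [tsum_eq_single 2 h]
    have hm : mCoeff 2 (2 * 0) = 1 - ((3:ℝ))⁻¹ := by
      unfold mCoeff; norm_num
    have hE2 : Eeven 2 = cConst * (3 / ((3:ℝ) - 1)) := by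
      have := Eeven_apply 1
      simpa using this
    have hE0 : Eeven (2 * 0) = cConst := by
      have := Eeven_apply 0
      simpa using this
    rw [hm, hE2, hE0]
    ring
  · -- s = 2(k+1) : r ∈ {2k, 2k+4}
    have h : ∀ r : ℕ, r ∉ ({2 * k, 2 * (k + 2)} : Finset ℕ) →
        mCoeff r (2 * (k + 1)) * Eeven r = 0 := by
      intro r hr
      simp only [Finset.mem_insert, Finset.mem_singleton] at hr
      have h0 : mCoeff r (2 * (k + 1)) = 0 := mCoeff_eq_zero (by omega) (by omega)
      exact mul_eq_zero_of_left h0 _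
    rw [tsum_eq_sum h]
    have hne : (2 * k : ℕ) ≠ 2 * (k + 2) := by omega
    rw [Finset.sum_pair hne]
    have hm1 : mCoeff (2 * k) (2 * (k + 1)) = ((3:ℝ) ^ k)⁻¹ := by
      unfold mCoeff
      rw [if_pos (even_two_mul k), if_neg (by omega : ¬ (2 * (k + 1) + 2 = 2 * k)),
        if_pos (by omega : 2 * (k + 1) = 2 * k + 2),
        Nat.mul_div_cancel_left k (by norm_num : 0 < 2)]
    have hm2 : mCoeff (2 * (k + 2)) (2 * (k + 1)) = 1 - ((3:ℝ) ^ (k + 2))⁻¹ := by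
      unfold mCoeff
      rw [if_pos (even_two_mul (k + 2)), if_pos (by omega : 2 * (k + 1) + 2 = 2 * (k + 2)),
        Nat.mul_div_cancel_left (k + 2) (by norm_num : 0 < 2)]
    rw [hm1, hm2, Eeven_apply k, Eeven_apply (k + 1), Eeven_apply (k + 2)]
    set P : ℝ := ∏ i ∈ Finset.Icc 1 k, 3 / ((3 : ℝ) ^ i - 1) with hP
    have e1 : ∏ i ∈ Finset.Icc 1 (k + 1), 3 / ((3 : ℝ) ^ i - 1)
        = P * (3 / ((3:ℝ) ^ (k+1) - 1)) := by
      rw [Finset.prod_Icc_succ_top (by omega : 1 ≤ k + 1)]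
    have e2 : ∏ i ∈ Finset.Icc 1 (k + 2), 3 / ((3 : ℝ) ^ i - 1)
        = P * (3 / ((3:ℝ) ^ (k+1) - 1)) * (3 / ((3:ℝ) ^ (k+2) - 1)) := by
      rw [Finset.prod_Icc_succ_top (by omega : 1 ≤ k + 2), e1]
    rw [e1, e2]
    have n1 := pow_sub_one_ne (k + 1) (by omega)
    have n2 := pow_sub_one_ne (k + 2) (by omega)
    have n3 : (3:ℝ) ^ k ≠ 0 := by positivity
    field_simp
    ring_nf
end
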